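/- Let n_0 < n_1 < ... < n_p be positive integers that minimally generate a numerical semigroup (gcd 1, and no n_i is in the submonoid generated by the others). Then {n_0,...,n_p} is a compound sequence if and only if n_1·n_2⋯n_{p-1} = gcd(n_0,n_1)·gcd(n_1,n_2)⋯gcd(n_{p-1},n_p). -/

import Mathlib

private lemma shiftIcc (p : ℕ) (f : ℕ → ℕ) :
    ∏ i ∈ Finset.Icc 1 p, f (i - 1) = ∏ i ∈ Finset.range p, f i := by
  rw [← Finset.Ico_add_one_right_eq_Icc, Finset.prod_Ico_eq_prod_range]
  simp

private lemma splitIcc (i p : ℕ) (hi : i ≤ p) (f : ℕ → ℕ) :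
    (∏ j ∈ Finset.Icc 1 i, f j) * ∏ j ∈ Finset.Icc (i+1) p, f j
      = ∏ j ∈ Finset.Icc 1 p, f j := by
  rw [show Finset.Icc 1 i = Finset.Ioc 0 i from Finset.Icc_add_one_left_eq_Ioc 0 i,
    show Finset.Icc 1 p = Finset.Ioc 0 p from Finset.Icc_add_one_left_eq_Ioc 0 p,
    show Finset.Icc (i+1) p = Finset.Ioc i p from Finset.Icc_add_one_left_eq_Ioc i p]
  exact Finset.prod_Ioc_consecutive f (Nat.zero_le i) hi

theorem stmt7 (p : ℕ) (hp : 1 ≤ p) (n : ℕ → ℕ)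
    (hpos : ∀ i, i ≤ p → 0 < n i)
    (hmono : ∀ i, 1 ≤ i → i ≤ p → n (i - 1) < n i)
    (hgcd : (Finset.range (p + 1)).gcd n = 1)
    (hmin : ∀ i, i ≤ p → ∀ x : ℕ → ℕ, x i = 0 →
        ∑ j ∈ Finset.range (p+1), x j * n j ≠ n i) :
    (∃ a b : ℕ → ℕ,
        (∀ i, 1 ≤ i → i ≤ p → 2 ≤ a i ∧ a i < b i) ∧
        (∀ i j, 1 ≤ j → j ≤ i → i ≤ p → Nat.gcd (a i) (b j) = 1) ∧
        (∀ i, i ≤ p → n i = (∏ j ∈ Finset.Icc 1 i, b j) * ∏ j ∈ Finset.Icc (i+1) p, a j))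
    ↔ ∏ j ∈ Finset.Ico 1 p, n j = ∏ j ∈ Finset.Icc 1 p, Nat.gcd (n (j-1)) (n j) := by
  constructor
  · rintro ⟨a, b, hab, hcop, hn⟩
    set B : ℕ → ℕ := fun k => ∏ j ∈ Finset.Icc 1 k, b j with hB
    set A : ℕ → ℕ := fun k => ∏ j ∈ Finset.Icc (k+1) p, a j with hA
    -- gcd formula
    have hgcdd : ∀ i, 1 ≤ i → i ≤ p → Nat.gcd (n (i-1)) (n i) = B (i-1) * A i := by
      intro i h1 h2
      have hi1 : i - 1 + 1 = i := by omega
      have hsplitA : A (i-1) = a i * A i := by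
        have h3 : Finset.Icc (i - 1 + 1) p = insert i (Finset.Icc (i+1) p) := by
          rw [hi1, Finset.Icc_add_one_left_eq_Ioc, Finset.Ioc_insert_left h2, ← hi1, Finset.Icc_add_one_left_eq_Ioc]
        simp only [hA, h3]
        rw [Finset.prod_insert (by simp)]
      have hsplitB : B i = B (i-1) * b i := by
        have h3 : Finset.Icc 1 i = insert i (Finset.Icc 1 (i-1)) := by
          rw [show Finset.Icc 1 (i-1) = Finset.Ico 1 i by
              rw [← Finset.Ico_add_one_right_eq_Icc, Nat.sub_one, ← Nat.succ_eq_add_one, Nat.succ_pred_eq_of_pos (by omega)],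
            Finset.Ico_insert_right h1]
        simp only [hB, h3]
        rw [Finset.prod_insert (by simp only [Finset.mem_Icc]; omega)]
        ring
      have hn1 : n (i - 1) = (B (i-1) * A i) * a i := by
        rw [hn (i-1) (by omega)]
        show B (i-1) * A (i-1) = _
        rw [hsplitA]; ring
      have hn2 : n i = (B (i-1) * A i) * b i := by
        rw [hn i h2]
        show B i * A i = _
        rw [hsplitB]; ring
      rw [hn1, hn2, Nat.gcd_mul_left, hcop i i h1 le_rfl h2, mul_one]
    have e1 : ∏ i ∈ Finset.Icc 1 p, B (i-1) = ∏ i ∈ Finset.Ico 1 p, B i := by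
      rw [shiftIcc, Finset.range_eq_Ico, Finset.prod_eq_prod_Ico_succ_bot (by omega : 0 < p)]
      have : B 0 = 1 := by simp [hB]
      rw [this, one_mul]
    have e2 : ∏ i ∈ Finset.Icc 1 p, A i = ∏ i ∈ Finset.Ico 1 p, A i := by
      rw [← Finset.Ico_insert_right hp, Finset.prod_insert (by simp)]
      have : A p = 1 := by simp [hA]
      rw [this, one_mul]
    have main : ∏ j ∈ Finset.Icc 1 p, Nat.gcd (n (j-1)) (n j)
        = ∏ j ∈ Finset.Ico 1 p, n j := by
      calc ∏ j ∈ Finset.Icc 1 p, Nat.gcd (n (j-1)) (n j)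
          = ∏ j ∈ Finset.Icc 1 p, (B (j-1) * A j) := by
            refine Finset.prod_congr rfl (fun j hj => ?_)
            simp only [Finset.mem_Icc] at hj
            exact hgcdd j hj.1 hj.2
        _ = (∏ j ∈ Finset.Icc 1 p, B (j-1)) * ∏ j ∈ Finset.Icc 1 p, A j :=
            Finset.prod_mul_distrib
        _ = (∏ j ∈ Finset.Ico 1 p, B j) * ∏ j ∈ Finset.Ico 1 p, A j := by rw [e1, e2]
        _ = ∏ j ∈ Finset.Ico 1 p, (B j * A j) := Finset.prod_mul_distrib.symm
        _ = ∏ j ∈ Finset.Ico 1 p, n j := by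
            refine Finset.prod_congr rfl (fun j hj => ?_)
            simp only [Finset.mem_Ico] at hj
            exact (hn j (by omega)).symm
    exact main.symm
  · intro E
    set d : ℕ → ℕ := fun i => Nat.gcd (n (i-1)) (n i) with hd
    set a : ℕ → ℕ := fun i => n (i-1) / d i with ha
    set b : ℕ → ℕ := fun i => n i / d i with hb
    have hdpos : ∀ i, 1 ≤ i → i ≤ p → 0 < d i := fun i h1 h2 =>
      Nat.gcd_pos_of_pos_right _ (hpos i h2)
    have hna : ∀ i, 1 ≤ i → i ≤ p → n (i-1) = a i * d i := fun i h1 h2 =>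
      (Nat.div_mul_cancel (Nat.gcd_dvd_left _ _)).symm
    have hnb : ∀ i, 1 ≤ i → i ≤ p → n i = b i * d i := fun i h1 h2 =>
      (Nat.div_mul_cancel (Nat.gcd_dvd_right _ _)).symm
    have hapos : ∀ i, 1 ≤ i → i ≤ p → 0 < a i := by
      intro i h1 h2
      have := hpos (i-1) (by omega)
      rw [hna i h1 h2] at this
      exact Nat.pos_of_ne_zero (fun h0 => by simp [h0] at this)
    -- n 0 = ∏ a
    have hn0 : n 0 = ∏ i ∈ Finset.Icc 1 p, a i := by
      have h1 : ∏ i ∈ Finset.Icc 1 p, n (i-1) = n 0 * ∏ j ∈ Finset.Ico 1 p, n j := by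
        rw [shiftIcc, Finset.range_eq_Ico, Finset.prod_eq_prod_Ico_succ_bot (by omega : 0 < p)]
      have h2 : ∏ i ∈ Finset.Icc 1 p, n (i-1)
          = (∏ i ∈ Finset.Icc 1 p, a i) * ∏ i ∈ Finset.Icc 1 p, d i := by
        rw [← Finset.prod_mul_distrib]
        refine Finset.prod_congr rfl (fun i hi => ?_)
        simp only [Finset.mem_Icc] at hi
        exact hna i hi.1 hi.2
      have hdprodpos : 0 < ∏ i ∈ Finset.Icc 1 p, d i := by
        apply Finset.prod_pos
        intro i hi
        simp only [Finset.mem_Icc] at hi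
        exact hdpos i hi.1 hi.2
      have := h1.symm.trans h2
      rw [E] at this
      exact Nat.eq_of_mul_eq_mul_right hdprodpos this
    -- main formula by induction
    have hform : ∀ i, i ≤ p → n i * ∏ j ∈ Finset.Icc 1 i, a j
        = n 0 * ∏ j ∈ Finset.Icc 1 i, b j := by
      intro i
      induction i with
      | zero => intro _; simp
      | succ k ih =>
        intro hk
        have hk' : k ≤ p := by omega
        rw [Finset.prod_Icc_succ_top (by omega), Finset.prod_Icc_succ_top (by omega)]
        have e1 : n (k+1) * a (k+1) = b (k+1) * n k := by
          have h1 := hna (k+1) (by omega) hk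
          have h2 := hnb (k+1) (by omega) hk
          simp only [Nat.add_sub_cancel] at h1
          rw [h2, h1]; ring
        calc n (k+1) * ((∏ j ∈ Finset.Icc 1 k, a j) * a (k+1))
            = (n (k+1) * a (k+1)) * ∏ j ∈ Finset.Icc 1 k, a j := by ring
          _ = b (k+1) * (n k * ∏ j ∈ Finset.Icc 1 k, a j) := by rw [e1]; ring
          _ = b (k+1) * (n 0 * ∏ j ∈ Finset.Icc 1 k, b j) := by rw [ih hk']
          _ = n 0 * ((∏ j ∈ Finset.Icc 1 k, b j) * b (k+1)) := by ring
    have hni : ∀ i, i ≤ p →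
        n i = (∏ j ∈ Finset.Icc 1 i, b j) * ∏ j ∈ Finset.Icc (i+1) p, a j := by
      intro i hi
      have happos : 0 < ∏ j ∈ Finset.Icc 1 i, a j := by
        apply Finset.prod_pos
        intro j hj
        simp only [Finset.mem_Icc] at hj
        exact hapos j hj.1 (le_trans hj.2 hi)
      apply Nat.eq_of_mul_eq_mul_right happos
      rw [hform i hi, hn0, ← splitIcc i p hi a]
      ring
    refine ⟨a, b, ?_, ?_, hni⟩
    · intro i h1 h2
      constructor
      · by_contra hcon
        push_neg at hcon
        have hap := hapos i h1 h2
        have ha1 : a i = 1 := by omega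
        have hdvd : n (i-1) ∣ n i := by
          rw [hna i h1 h2, ha1, one_mul]
          exact Nat.gcd_dvd_right _ _
        apply hmin i h2 (fun j => if j = i - 1 then n i / n (i-1) else 0)
          (by have hne : ¬ (i = i - 1) := by omega
              simp [hne])
        have : ∀ j ∈ Finset.range (p+1),
            (if j = i - 1 then n i / n (i-1) else 0) * n j
              = if j = i - 1 then n i / n (i-1) * n j else 0 := by
          intro j _; split <;> simp
        rw [Finset.sum_congr rfl this, Finset.sum_ite_eq' (Finset.range (p+1))]
        rw [if_pos (by simp; omega)]
        exact Nat.div_mul_cancel hdvd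
      · have h3 := hmono i h1 h2
        rw [hna i h1 h2, hnb i h1 h2] at h3
        exact lt_of_mul_lt_mul_right h3 (Nat.zero_le _)
    · intro i j hj1 hji hip
      have key : ∀ k, k ≤ p → Nat.gcd (a i) (b j) ∣ n k := by
        intro k hk
        rcases le_or_gt j k with h | h
        · calc Nat.gcd (a i) (b j) ∣ b j := Nat.gcd_dvd_right _ _
            _ ∣ ∏ m ∈ Finset.Icc 1 k, b m :=
              Finset.dvd_prod_of_mem b (by simp only [Finset.mem_Icc]; omega)
            _ ∣ n k := by rw [hni k hk]; exact Dvd.intro _ rfl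
        · calc Nat.gcd (a i) (b j) ∣ a i := Nat.gcd_dvd_left _ _
            _ ∣ ∏ m ∈ Finset.Icc (k+1) p, a m :=
              Finset.dvd_prod_of_mem a (by simp only [Finset.mem_Icc]; omega)
            _ ∣ n k := by rw [hni k hk]; exact Dvd.intro_left _ rfl
      have : Nat.gcd (a i) (b j) ∣ (Finset.range (p+1)).gcd n := by
        apply Finset.dvd_gcd
        intro k hk
        simp only [Finset.mem_range] at hk
        exact key k (by omega)
      rw [hgcd] at this
      exact Nat.eq_one_of_dvd_one this
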